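/- Let f be convex and differentiable on a convex set Q ⊆ ℝ^n with Hölder-continuous gradient: ‖∇f(x₁) − ∇f(x₂)‖₂ ≤ L_ν‖x₁ − x₂‖₂^ν for some ν ∈ [0,1] and L_ν ≥ 0. Then for every x, y ∈ Q and every δ > 0: f(y) ≤ f(x) + ⟨∇f(x), y − x⟩ + (L_ν/(1+ν))‖y − x‖₂^{1+ν} ≤ f(x) + ⟨∇f(x), y − x⟩ + (L(δ)/2)‖y − x‖₂² + δ, where L(δ) = ((1−ν)/((1+ν)δ))^{(1−ν)/(1+ν)} · L_ν^{2/(1+ν)}. -/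

import Mathlib

open scoped RealInnerProductSpace

lemma scalar_majorant {ν Lν δ t : ℝ} (hν0 : 0 ≤ ν) (hν1 : ν ≤ 1) (hLν : 0 ≤ Lν)
    (hδ : 0 < δ) (ht : 0 ≤ t) :
    Lν / (1 + ν) * t ^ (1 + ν) ≤
      ((1 - ν) / ((1 + ν) * δ)) ^ ((1 - ν) / (1 + ν)) * Lν ^ (2 / (1 + ν)) / 2 * t ^ 2 + δ := by
  have h1ν : (0:ℝ) < 1 + ν := by linarith
  set a : ℝ := (1 - ν) / ((1 + ν) * δ) with ha_def
  have ha : 0 ≤ a := div_nonneg (by linarith) (by positivity)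
  set C : ℝ := a ^ ((1 - ν) / (1 + ν)) * Lν ^ (2 / (1 + ν)) with hC_def
  have hC : 0 ≤ C := by positivity
  set θ : ℝ := (1 + ν) / 2 with hθ_def
  have hθ0 : 0 < θ := by positivity
  have hθ1 : θ ≤ 1 := by rw [hθ_def]; linarith
  rcases eq_or_lt_of_le hν1 with hν1' | hν1'
  · -- ν = 1
    subst hν1'
    have : C = Lν := by
      rw [hC_def, ha_def]
      norm_num
    rw [this]
    have ht2 : t ^ ((1:ℝ) + 1) = t ^ 2 := by
      rw [show ((1:ℝ)+1) = ((2:ℕ):ℝ) by norm_num, Real.rpow_natCast]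
    rw [ht2]
    nlinarith [sq_nonneg t, hδ]
  · -- ν < 1
    set v : ℝ := 2 * δ / (1 - ν) with hv_def
    have h1ν' : (0:ℝ) < 1 - ν := by linarith
    have hv : 0 ≤ v := by positivity
    set u : ℝ := C / (1 + ν) with hu_def
    have hu : 0 ≤ u := by positivity
    -- key: Lν / (1+ν) ≤ u ^ θ * v ^ (1-θ)
    have hCθ : C ^ θ = a ^ (1 - θ) * Lν := by
      rw [hC_def, Real.mul_rpow (by positivity) (by positivity),
        ← Real.rpow_mul ha, ← Real.rpow_mul hLν]
      have e1 : (1 - ν) / (1 + ν) * θ = 1 - θ := by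
        rw [hθ_def]; field_simp; ring
      have e2 : 2 / (1 + ν) * θ = 1 := by
        rw [hθ_def]; field_simp
      rw [e1, e2, Real.rpow_one]
    have hav : a * v = 2 / (1 + ν) := by
      rw [ha_def, hv_def]; field_simp
    have hkey : Lν / (1 + ν) ≤ u ^ θ * v ^ (1 - θ) := by
      rw [hu_def, Real.div_rpow hC (le_of_lt h1ν), hCθ]
      have : a ^ (1 - θ) * Lν / (1 + ν) ^ θ * v ^ (1 - θ)
          = (a * v) ^ (1 - θ) * Lν / (1 + ν) ^ θ := by
        rw [Real.mul_rpow ha hv]; ring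
      rw [this, hav]
      have h2 : (1:ℝ) ≤ (2 / (1 + ν)) ^ (1 - θ) :=
        Real.one_le_rpow (by rw [le_div_iff₀ h1ν]; linarith) (by linarith)
      have h3 : (1 + ν) ^ θ ≤ 1 + ν := by
        nth_rewrite 2 [show (1+ν) = (1+ν) ^ (1:ℝ) by rw [Real.rpow_one]]
        exact Real.rpow_le_rpow_of_exponent_le (by linarith) hθ1
      have h4 : (0:ℝ) < (1 + ν) ^ θ := Real.rpow_pos_of_pos h1ν θ
      calc Lν / (1 + ν) ≤ Lν / (1 + ν) ^ θ := by
            exact div_le_div_of_nonneg_left hLν h4 h3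
        _ ≤ (2 / (1 + ν)) ^ (1 - θ) * Lν / (1 + ν) ^ θ := by
            rw [mul_div_assoc]
            exact le_mul_of_one_le_left (by positivity) h2
    -- AM-GM
    have hAMGM : (u * t ^ 2) ^ θ * v ^ (1 - θ) ≤ θ * (u * t ^ 2) + (1 - θ) * v :=
      Real.geom_mean_le_arith_mean2_weighted (le_of_lt hθ0) (by linarith)
        (by positivity) hv (by ring)
    have hpow : t ^ (1 + ν) = (t ^ 2) ^ θ := by
      rw [show (t:ℝ) ^ (2:ℕ) = t ^ ((2:ℕ):ℝ) by rw [Real.rpow_natCast],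
        ← Real.rpow_mul ht]
      congr 1
      rw [hθ_def]; ring
    have hmulpow : (u * t ^ 2) ^ θ = u ^ θ * (t ^ 2) ^ θ :=
      Real.mul_rpow hu (by positivity)
    have hθu : θ * (u * t ^ 2) = C / 2 * t ^ 2 := by
      rw [hθ_def, hu_def]; field_simp
    have hθv : (1 - θ) * v = δ := by
      rw [hθ_def, hv_def]; field_simp; ring
    calc Lν / (1 + ν) * t ^ (1 + ν)
        = (Lν / (1 + ν)) * (t ^ 2) ^ θ := by rw [hpow]
      _ ≤ (u ^ θ * v ^ (1 - θ)) * (t ^ 2) ^ θ := by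
          apply mul_le_mul_of_nonneg_right hkey (by positivity)
      _ = (u * t ^ 2) ^ θ * v ^ (1 - θ) := by rw [hmulpow]; ring
      _ ≤ θ * (u * t ^ 2) + (1 - θ) * v := hAMGM
      _ = C / 2 * t ^ 2 + δ := by rw [hθu, hθv]

lemma descent_lemma {n : ℕ}
    (Q : Set (EuclideanSpace ℝ (Fin n))) (hQconv : Convex ℝ Q)
    (f : EuclideanSpace ℝ (Fin n) → ℝ)
    (gf : EuclideanSpace ℝ (Fin n) → EuclideanSpace ℝ (Fin n))
    (hgf : ∀ w ∈ Q, HasGradientAt f (gf w) w)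
    (ν Lν : ℝ) (hν0 : 0 ≤ ν) (hLν : 0 ≤ Lν)
    (hH : ∀ w ∈ Q, ∀ v ∈ Q, ‖gf w - gf v‖ ≤ Lν * ‖w - v‖ ^ ν)
    {x y : EuclideanSpace ℝ (Fin n)} (hx : x ∈ Q) (hy : y ∈ Q) :
    f y ≤ f x + ⟪gf x, y - x⟫ + Lν / (1 + ν) * ‖y - x‖ ^ (1 + ν) := by
  have h1ν : (0:ℝ) < 1 + ν := by linarith
  set u := y - x with hu_def
  set c : ℝ := ⟪gf x, y - x⟫ with hc_def
  set K : ℝ := Lν / (1 + ν) * ‖u‖ ^ (1 + ν) with hK_def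
  set γ : ℝ → EuclideanSpace ℝ (Fin n) := fun t => x + t • u with hγ_def
  have hγmem : ∀ t ∈ Set.Icc (0:ℝ) 1, γ t ∈ Q := fun t ht =>
    hQconv.add_smul_sub_mem hx hy ht
  have hγderiv : ∀ t : ℝ, HasDerivAt γ u t := fun t => by
    simpa [hγ_def] using ((hasDerivAt_id t).smul_const u).const_add x
  have hfd : ∀ t ∈ Set.Icc (0:ℝ) 1,
      HasDerivAt (fun s => f (γ s)) ⟪gf (γ t), u⟫ t := by
    intro t ht
    have h1 := (hgf (γ t) (hγmem t ht)).hasFDerivAt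
    have h2 := h1.comp_hasDerivAt t (hγderiv t)
    simp at h2; exact h2
  set φ : ℝ → ℝ := fun t => f (γ t) - t * c - K * t ^ (1 + ν) with hφ_def
  have hφd : ∀ t ∈ Set.Icc (0:ℝ) 1,
      HasDerivAt φ (⟪gf (γ t), u⟫ - c - K * ((1 + ν) * t ^ ν)) t := by
    intro t ht
    have hr : HasDerivAt (fun s : ℝ => s ^ (1 + ν)) ((1 + ν) * t ^ ν) t := by
      have := Real.hasDerivAt_rpow_const (x := t) (p := 1 + ν) (Or.inr (by linarith))
      simpa [show 1 + ν - 1 = ν by ring] using this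
    exact ((hfd t ht).sub (hasDerivAt_mul_const c)).sub (hr.const_mul K)
  have hbound : ∀ t ∈ Set.Icc (0:ℝ) 1,
      ⟪gf (γ t), u⟫ - c - K * ((1 + ν) * t ^ ν) ≤ 0 := by
    intro t ht
    have hinner : ⟪gf (γ t), u⟫ - c = ⟪gf (γ t) - gf x, u⟫ := by
      rw [hc_def, ← inner_sub_left]
    have hCS : ⟪gf (γ t) - gf x, u⟫ ≤ ‖gf (γ t) - gf x‖ * ‖u‖ :=
      real_inner_le_norm _ _
    have hHb : ‖gf (γ t) - gf x‖ ≤ Lν * (t ^ ν * ‖u‖ ^ ν) := by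
      have := hH (γ t) (hγmem t ht) x hx
      have hγx : γ t - x = t • u := by rw [hγ_def]; exact add_sub_cancel_left x (t • u)
      rw [hγx] at this
      have hn : ‖t • u‖ = t * ‖u‖ := by
        rw [norm_smul, Real.norm_eq_abs, abs_of_nonneg ht.1]
      rwa [hn, Real.mul_rpow ht.1 (norm_nonneg u)] at this
    have hKmul : K * (1 + ν) = Lν * ‖u‖ ^ (1 + ν) := by
      rw [hK_def]; field_simp
    have hupow : ‖u‖ ^ (1 + ν) = ‖u‖ ^ ν * ‖u‖ := by
      rw [show (1:ℝ) + ν = ν + 1 by ring,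
        Real.rpow_add' (norm_nonneg u) (by positivity), Real.rpow_one]
    have h1 : ⟪gf (γ t) - gf x, u⟫ ≤ Lν * (t ^ ν * ‖u‖ ^ ν) * ‖u‖ :=
      hCS.trans (mul_le_mul_of_nonneg_right hHb (norm_nonneg u))
    have h2 : K * ((1 + ν) * t ^ ν) = Lν * (t ^ ν * ‖u‖ ^ ν) * ‖u‖ := by
      rw [← mul_assoc, hKmul, hupow]; ring
    rw [hinner, h2]; linarith
  have hanti : AntitoneOn φ (Set.Icc (0:ℝ) 1) := by
    apply antitoneOn_of_deriv_nonpos (convex_Icc 0 1)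
    · exact fun t ht => (hφd t ht).continuousAt.continuousWithinAt
    · intro t ht
      rw [interior_Icc] at ht
      exact (hφd t (Set.Ioo_subset_Icc_self ht)).differentiableAt.differentiableWithinAt
    · intro t ht
      rw [interior_Icc] at ht
      have ht' := Set.Ioo_subset_Icc_self ht
      rw [(hφd t ht').deriv]
      exact hbound t ht'
  have h01 : φ 1 ≤ φ 0 := hanti (Set.mem_Icc.2 ⟨le_refl 0, zero_le_one⟩)
    (Set.mem_Icc.2 ⟨zero_le_one, le_refl 1⟩) zero_le_one
  have hφ0 : φ 0 = f x := by
    simp [hφ_def, hγ_def, Real.zero_rpow (ne_of_gt h1ν)]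
  have hφ1 : φ 1 = f y - c - K := by
    simp [hφ_def, hγ_def, hu_def]
  rw [hφ0, hφ1] at h01
  linarith


/-- A function with `ν`-Hölder-continuous gradient admits, for every `δ > 0`, the
quadratic upper bound with constant `L(δ) = ((1-ν)/((1+ν)δ))^{(1-ν)/(1+ν)} L_ν^{2/(1+ν)}`
shifted by `δ`. -/
theorem hoelder_gradient_quadratic_majorant {n : ℕ}
    (Q : Set (EuclideanSpace ℝ (Fin n))) (hQconv : Convex ℝ Q)
    (f : EuclideanSpace ℝ (Fin n) → ℝ) (hfconv : ConvexOn ℝ Q f)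
    (gf : EuclideanSpace ℝ (Fin n) → EuclideanSpace ℝ (Fin n))
    (hgf : ∀ w ∈ Q, HasGradientAt f (gf w) w)
    (ν Lν : ℝ) (hν0 : 0 ≤ ν) (hν1 : ν ≤ 1) (hLν : 0 ≤ Lν)
    (hH : ∀ w ∈ Q, ∀ v ∈ Q, ‖gf w - gf v‖ ≤ Lν * ‖w - v‖ ^ ν) :
    ∀ x ∈ Q, ∀ y ∈ Q, ∀ δ : ℝ, 0 < δ →
      f y ≤ f x + ⟪gf x, y - x⟫ + Lν / (1 + ν) * ‖y - x‖ ^ (1 + ν) ∧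
      f x + ⟪gf x, y - x⟫ + Lν / (1 + ν) * ‖y - x‖ ^ (1 + ν) ≤
        f x + ⟪gf x, y - x⟫ +
          ((1 - ν) / ((1 + ν) * δ)) ^ ((1 - ν) / (1 + ν)) * Lν ^ (2 / (1 + ν)) / 2 *
            ‖y - x‖ ^ 2 + δ := by
  intro x hx y hy δ hδ
  refine ⟨descent_lemma Q hQconv f gf hgf ν Lν hν0 hLν hH hx hy, ?_⟩
  have h := scalar_majorant hν0 hν1 hLν hδ (norm_nonneg (y - x))
  linarith
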